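/- Let Θ₁ and Θ₂ be two distinct commuting involutive antimorphisms of A* for a finite alphabet A, and let u be a uniformly recurrent infinite word over A whose language is closed under both Θ₁ and Θ₂. Then there exists an integer N such that for all n > N: ΔC(n) + 4 ≥ P_{Θ₁}(n) + P_{Θ₂}(n) + P_{Θ₁}(n+1) + P_{Θ₂}(n+1). -/

import Mathlib

open scoped Classical
set_option linter.unusedSectionVars false

/-- The finite word `w` occurs in the infinite word `u` at position `i`. -/
def OccursAt {A : Type*} (u : ℕ → A) (w : List A) (i : ℕ) : Prop :=
  w = (List.range w.length).map fun k => u (i + k)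

/-- The finite word `w` is a factor of the infinite word `u`. -/
def IsFactor {A : Type*} (u : ℕ → A) (w : List A) : Prop :=
  ∃ i, OccursAt u w i

/-- The (involutive) antimorphism of `A*` induced by the letter map `θ`:
it reverses a word and applies `θ` letterwise. -/
def antim {A : Type*} (θ : A → A) (w : List A) : List A :=
  (w.map θ).reverse

/-- `w` is a `θ`-palindrome, i.e. a fixed point of the antimorphism induced by `θ`. -/
def IsPalin {A : Type*} (θ : A → A) (w : List A) : Prop :=
  antim θ w = w

/-- Factor complexity of the infinite word `u`. -/
noncomputable def fC {A : Type*} (u : ℕ → A) (n : ℕ) : ℕ :=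
  Set.ncard {w : List A | w.length = n ∧ IsFactor u w}

/-- `θ`-palindromic complexity of the infinite word `u`. -/
noncomputable def fP {A : Type*} (u : ℕ → A) (θ : A → A) (n : ℕ) : ℕ :=
  Set.ncard {w : List A | w.length = n ∧ IsFactor u w ∧ IsPalin θ w}

/-- `γ_Θ(w)`: the number of pairs `{a, θ a}` with `a` occurring in `w` and `a ≠ θ a`. -/
noncomputable def gammaTheta {A : Type*} (θ : A → A) (w : List A) : ℕ :=
  Set.ncard {s : Set A | ∃ a ∈ w, θ a ≠ a ∧ s = {a, θ a}}

/-- The set of `θ`-palindromic factors of the finite word `w`. -/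
def palFactors {A : Type*} (θ : A → A) (w : List A) : Set (List A) :=
  {p | p <:+: w ∧ IsPalin θ p}

/-- The `Θ`-defect of a finite word `w`. -/
noncomputable def defect {A : Type*} (θ : A → A) (w : List A) : ℤ :=
  (w.length : ℤ) + 1 - gammaTheta θ w - Set.ncard (palFactors θ w)

/-- The number of occurrences of `w` in the finite word `v`. -/
noncomputable def numOcc {A : Type*} (w v : List A) : ℕ :=
  Set.ncard {i : ℕ | i + w.length ≤ v.length ∧ w <+: v.drop i}

/-- `u` is uniformly recurrent: every factor occurs infinitely many times with
bounded gaps between consecutive occurrences. -/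
def UniformlyRecurrent {A : Type*} (u : ℕ → A) : Prop :=
  ∀ w : List A, IsFactor u w →
    ∃ B : ℕ, ∀ i : ℕ, ∃ j : ℕ, i ≤ j ∧ j ≤ i + B ∧ OccursAt u w j

namespace TwoAnti

variable {A : Type*}

/-- The factor of `u` at position `i` of length `m`. -/
def fac (u : ℕ → A) (i m : ℕ) : List A := (List.range m).map fun k => u (i + k)

lemma fac_length (u : ℕ → A) (i m : ℕ) : (fac u i m).length = m := by
  simp [fac]

lemma occursAt_fac (u : ℕ → A) (i m : ℕ) : OccursAt u (fac u i m) i := by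
  unfold OccursAt
  rw [fac_length]
  rfl

lemma isFactor_fac (u : ℕ → A) (i m : ℕ) : IsFactor u (fac u i m) :=
  ⟨i, occursAt_fac u i m⟩

lemma eq_fac {u : ℕ → A} {w : List A} {m : ℕ} (hl : w.length = m) (hf : IsFactor u w) :
    ∃ i, w = fac u i m := by
  obtain ⟨i, hi⟩ := hf
  exact ⟨i, by rw [OccursAt, hl] at hi; exact hi⟩

lemma fac_succ (u : ℕ → A) (i m : ℕ) : fac u i (m + 1) = fac u i m ++ [u (i + m)] := by
  simp [fac, List.range_succ]

lemma fac_succ' (u : ℕ → A) (i m : ℕ) : fac u i (m + 1) = u i :: fac u (i + 1) m := by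
  simp only [fac, List.range_succ_eq_map, List.map_cons, List.map_map]
  congr 1
  apply List.map_congr_left
  intro a _
  simp only [Function.comp_apply, Nat.succ_eq_add_one]
  congr 1
  omega

lemma dropLast_fac (u : ℕ → A) (i m : ℕ) : (fac u i (m + 1)).dropLast = fac u i m := by
  rw [fac_succ]; simp

lemma tail_fac (u : ℕ → A) (i m : ℕ) : (fac u i (m + 1)).tail = fac u (i + 1) m := by
  rw [fac_succ']; simp

lemma antim_length (θ : A → A) (w : List A) : (antim θ w).length = w.length := by
  simp [antim]

lemma dropLast_reverse (l : List A) : l.reverse.dropLast = l.tail.reverse := by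
  have := List.tail_reverse (l := l.reverse)
  rw [List.reverse_reverse] at this
  rw [this, List.reverse_reverse]

lemma dropLast_antim (θ : A → A) (e : List A) :
    (antim θ e).dropLast = antim θ e.tail := by
  rw [antim, antim, dropLast_reverse, List.map_tail]

lemma tail_antim (θ : A → A) (e : List A) :
    (antim θ e).tail = antim θ e.dropLast := by
  rw [antim, antim, List.tail_reverse, List.map_dropLast]

section Orb

variable (θ₁ θ₂ : A → A)

/-- The morphism `Θ₁Θ₂`. -/
def T3 (w : List A) : List A := w.map (θ₁ ∘ θ₂)

/-- The orbit of a word under the group `{Id, Θ₁, Θ₂, Θ₁Θ₂}`. -/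
noncomputable def orb (w : List A) : Finset (List A) :=
  {w, antim θ₁ w, antim θ₂ w, T3 θ₁ θ₂ w}

lemma T3_length (w : List A) : (T3 θ₁ θ₂ w).length = w.length := by simp [T3]

lemma dropLast_T3 (e : List A) : (T3 θ₁ θ₂ e).dropLast = T3 θ₁ θ₂ e.dropLast := by
  simp [T3, List.map_dropLast]

lemma tail_T3 (e : List A) : (T3 θ₁ θ₂ e).tail = T3 θ₁ θ₂ e.tail := by
  simp [T3, List.map_tail]

variable {θ₁ θ₂}
variable (h₁ : Function.Involutive θ₁) (h₂ : Function.Involutive θ₂)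
  (hcomm : θ₁ ∘ θ₂ = θ₂ ∘ θ₁)

section Identities
include h₁ in
lemma t11 (w : List A) : antim θ₁ (antim θ₁ w) = w := by
  simp only [antim, List.map_reverse, List.reverse_reverse, List.map_map]
  rw [show θ₁ ∘ θ₁ = id from funext h₁, List.map_id]

include h₂ in
lemma t22 (w : List A) : antim θ₂ (antim θ₂ w) = w := by
  simp only [antim, List.map_reverse, List.reverse_reverse, List.map_map]
  rw [show θ₂ ∘ θ₂ = id from funext h₂, List.map_id]

lemma t12 (w : List A) : antim θ₁ (antim θ₂ w) = T3 θ₁ θ₂ w := by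
  simp only [antim, T3, List.map_reverse, List.reverse_reverse, List.map_map]

include hcomm in
lemma t21 (w : List A) : antim θ₂ (antim θ₁ w) = T3 θ₁ θ₂ w := by
  simp only [antim, T3, List.map_reverse, List.reverse_reverse, List.map_map]
  rw [hcomm]

include h₁ in
lemma t13 (w : List A) : antim θ₁ (T3 θ₁ θ₂ w) = antim θ₂ w := by
  simp only [antim, T3, List.map_map]
  rw [show θ₁ ∘ (θ₁ ∘ θ₂) = θ₂ from funext fun a => by simp [h₁ (θ₂ a)]]

include h₁ hcomm in
lemma t31 (w : List A) : T3 θ₁ θ₂ (antim θ₁ w) = antim θ₂ w := by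
  have hh : (θ₁ ∘ θ₂) ∘ θ₁ = θ₂ := by
    calc (θ₁ ∘ θ₂) ∘ θ₁ = (θ₂ ∘ θ₁) ∘ θ₁ := by rw [hcomm]
    _ = θ₂ := funext fun a => by simp [h₁ a]
  simp only [antim, T3, List.map_reverse, List.map_map]
  rw [hh]

include h₂ hcomm in
lemma t23 (w : List A) : antim θ₂ (T3 θ₁ θ₂ w) = antim θ₁ w := by
  have hh : θ₂ ∘ (θ₁ ∘ θ₂) = θ₁ := by
    calc θ₂ ∘ (θ₁ ∘ θ₂) = θ₂ ∘ (θ₂ ∘ θ₁) := by rw [hcomm]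
    _ = θ₁ := funext fun a => by simp [h₂ (θ₁ a)]
  simp only [antim, T3, List.map_map]
  rw [hh]

include h₂ in
lemma t32 (w : List A) : T3 θ₁ θ₂ (antim θ₂ w) = antim θ₁ w := by
  simp only [antim, T3, List.map_reverse, List.map_map]
  rw [show (θ₁ ∘ θ₂) ∘ θ₂ = θ₁ from funext fun a => by simp [h₂ a]]

include h₁ h₂ hcomm in
lemma t33 (w : List A) : T3 θ₁ θ₂ (T3 θ₁ θ₂ w) = w := by
  simp only [T3, List.map_map]
  have hh : (θ₁ ∘ θ₂) ∘ (θ₁ ∘ θ₂) = id := by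
    calc (θ₁ ∘ θ₂) ∘ (θ₁ ∘ θ₂) = θ₁ ∘ (θ₂ ∘ θ₁) ∘ θ₂ := by rfl
    _ = θ₁ ∘ (θ₁ ∘ θ₂) ∘ θ₂ := by rw [hcomm]
    _ = id := funext fun a => by simp [Function.comp_apply, h₂ a, h₁ a]
  rw [hh, List.map_id]
end Identities

lemma mem_orb_self (w : List A) : w ∈ orb θ₁ θ₂ w := by simp [orb]

lemma T3_mem_orb (w : List A) : T3 θ₁ θ₂ w ∈ orb θ₁ θ₂ w := by simp [orb]

include h₁ h₂ hcomm in
lemma orb_antim₁ (w : List A) : orb θ₁ θ₂ (antim θ₁ w) = orb θ₁ θ₂ w := by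
  unfold orb
  rw [t11 h₁, t21 hcomm, t31 h₁ hcomm]
  ext x
  simp only [Finset.mem_insert, Finset.mem_singleton]
  tauto

include h₁ h₂ hcomm in
lemma orb_antim₂ (w : List A) : orb θ₁ θ₂ (antim θ₂ w) = orb θ₁ θ₂ w := by
  unfold orb
  rw [t22 h₂, t12, t32 h₂]
  ext x
  simp only [Finset.mem_insert, Finset.mem_singleton]
  tauto

include h₁ h₂ hcomm in
lemma orb_T3 (w : List A) : orb θ₁ θ₂ (T3 θ₁ θ₂ w) = orb θ₁ θ₂ w := by
  unfold orb
  rw [t13 h₁, t23 h₂ hcomm, t33 h₁ h₂ hcomm]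
  ext x
  simp only [Finset.mem_insert, Finset.mem_singleton]
  tauto

include h₁ h₂ hcomm in
lemma orb_eq_of_mem {w y : List A} (hy : y ∈ orb θ₁ θ₂ w) :
    orb θ₁ θ₂ y = orb θ₁ θ₂ w := by
  simp only [orb, Finset.mem_insert, Finset.mem_singleton] at hy
  rcases hy with rfl | rfl | rfl | rfl
  · rfl
  · exact orb_antim₁ h₁ h₂ hcomm w
  · exact orb_antim₂ h₁ h₂ hcomm w
  · exact orb_T3 h₁ h₂ hcomm w

include h₁ h₂ hcomm in
lemma orb_card_four {w : List A} (hp1 : antim θ₁ w ≠ w) (hp2 : antim θ₂ w ≠ w)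
    (hw3 : T3 θ₁ θ₂ w ≠ w) : (orb θ₁ θ₂ w).card = 4 := by
  have d12 : antim θ₁ w ≠ antim θ₂ w := by
    intro h
    apply hw3
    rw [← t21 hcomm w, h, t22 h₂]
  have d13 : antim θ₁ w ≠ T3 θ₁ θ₂ w := by
    intro h
    apply hp2
    rw [← t13 h₁ w, ← h, t11 h₁]
  have d23 : antim θ₂ w ≠ T3 θ₁ θ₂ w := by
    intro h
    apply hp1
    rw [← t23 h₂ hcomm w, ← h, t22 h₂]
  unfold orb
  rw [Finset.card_insert_of_notMem (by
        simp only [Finset.mem_insert, Finset.mem_singleton]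
        push_neg
        exact ⟨Ne.symm hp1, Ne.symm hp2, Ne.symm hw3⟩),
      Finset.card_insert_of_notMem (by
        simp only [Finset.mem_insert, Finset.mem_singleton]
        push_neg
        exact ⟨d12, d13⟩),
      Finset.card_insert_of_notMem (by
        simp only [Finset.mem_singleton]
        exact d23),
      Finset.card_singleton]

include h₁ h₂ hcomm in
lemma orb_count {w : List A} (hw3 : T3 θ₁ θ₂ w ≠ w) :
    (orb θ₁ θ₂ w).card + ((orb θ₁ θ₂ w).filter (IsPalin θ₁)).card
      + ((orb θ₁ θ₂ w).filter (IsPalin θ₂)).card = 4 := by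
  by_cases hp1 : antim θ₁ w = w
  · -- θ₁-palindrome case
    have hT3 : T3 θ₁ θ₂ w = antim θ₂ w := by rw [← t21 hcomm w, hp1]
    have hp2 : antim θ₂ w ≠ w := by
      intro h; exact hw3 (by rw [hT3, h])
    have horb : orb θ₁ θ₂ w = {w, antim θ₂ w} := by
      ext x
      simp only [orb, hp1, hT3, Finset.mem_insert, Finset.mem_singleton]
      tauto
    have hcard : (orb θ₁ θ₂ w).card = 2 := by
      rw [horb, Finset.card_pair (Ne.symm hp2)]
    have hf1 : ((orb θ₁ θ₂ w).filter (IsPalin θ₁)) = orb θ₁ θ₂ w := by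
      apply Finset.filter_true_of_mem
      intro x hx
      rw [horb] at hx
      simp only [Finset.mem_insert, Finset.mem_singleton] at hx
      rcases hx with rfl | rfl
      · exact hp1
      · show antim θ₁ (antim θ₂ w) = antim θ₂ w
        rw [t12, hT3]
    have hf2 : ((orb θ₁ θ₂ w).filter (IsPalin θ₂)) = ∅ := by
      rw [Finset.filter_eq_empty_iff]
      intro x hx
      rw [horb] at hx
      simp only [Finset.mem_insert, Finset.mem_singleton] at hx
      rcases hx with rfl | rfl
      · exact hp2
      · show ¬ antim θ₂ (antim θ₂ w) = antim θ₂ w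
        rw [t22 h₂]
        exact fun h => hp2 h.symm
    rw [hcard, hf1, hf2, hcard]
    simp
  · by_cases hp2 : antim θ₂ w = w
    · -- θ₂-palindrome case
      have hT3 : T3 θ₁ θ₂ w = antim θ₁ w := by rw [← t12 w, hp2]
      have horb : orb θ₁ θ₂ w = {w, antim θ₁ w} := by
        ext x
        simp only [orb, hp2, hT3, Finset.mem_insert, Finset.mem_singleton]
        tauto
      have hcard : (orb θ₁ θ₂ w).card = 2 := by
        rw [horb, Finset.card_pair (Ne.symm hp1)]
      have hf2 : ((orb θ₁ θ₂ w).filter (IsPalin θ₂)) = orb θ₁ θ₂ w := by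
        apply Finset.filter_true_of_mem
        intro x hx
        rw [horb] at hx
        simp only [Finset.mem_insert, Finset.mem_singleton] at hx
        rcases hx with rfl | rfl
        · exact hp2
        · show antim θ₂ (antim θ₁ w) = antim θ₁ w
          rw [t21 hcomm, hT3]
      have hf1 : ((orb θ₁ θ₂ w).filter (IsPalin θ₁)) = ∅ := by
        rw [Finset.filter_eq_empty_iff]
        intro x hx
        rw [horb] at hx
        simp only [Finset.mem_insert, Finset.mem_singleton] at hx
        rcases hx with rfl | rfl
        · exact hp1
        · show ¬ antim θ₁ (antim θ₁ w) = antim θ₁ w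
          rw [t11 h₁]
          exact fun h => hp1 h.symm
      rw [hcard, hf1, hf2, hcard]
      simp
    · -- free orbit case
      have d12 : antim θ₁ w ≠ antim θ₂ w := by
        intro h; apply hw3; rw [← t21 hcomm w, h, t22 h₂]
      have d13 : antim θ₁ w ≠ T3 θ₁ θ₂ w := by
        intro h; apply hp2; rw [← t13 h₁ w, ← h, t11 h₁]
      have d23 : antim θ₂ w ≠ T3 θ₁ θ₂ w := by
        intro h; apply hp1; rw [← t23 h₂ hcomm w, ← h, t22 h₂]
      have hcard := orb_card_four h₁ h₂ hcomm hp1 hp2 hw3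
      have hf1 : ((orb θ₁ θ₂ w).filter (IsPalin θ₁)) = ∅ := by
        rw [Finset.filter_eq_empty_iff]
        intro x hx
        simp only [orb, Finset.mem_insert, Finset.mem_singleton] at hx
        rcases hx with rfl | rfl | rfl | rfl
        · exact hp1
        · show ¬ antim θ₁ (antim θ₁ w) = antim θ₁ w
          rw [t11 h₁]; exact fun h => hp1 h.symm
        · show ¬ antim θ₁ (antim θ₂ w) = antim θ₂ w
          rw [t12]; exact fun h => d23 h.symm
        · show ¬ antim θ₁ (T3 θ₁ θ₂ w) = T3 θ₁ θ₂ w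
          rw [t13 h₁]; exact d23
      have hf2 : ((orb θ₁ θ₂ w).filter (IsPalin θ₂)) = ∅ := by
        rw [Finset.filter_eq_empty_iff]
        intro x hx
        simp only [orb, Finset.mem_insert, Finset.mem_singleton] at hx
        rcases hx with rfl | rfl | rfl | rfl
        · exact hp2
        · show ¬ antim θ₂ (antim θ₁ w) = antim θ₁ w
          rw [t21 hcomm]; exact fun h => d13 h.symm
        · show ¬ antim θ₂ (antim θ₂ w) = antim θ₂ w
          rw [t22 h₂]; exact fun h => hp2 h.symm
        · show ¬ antim θ₂ (T3 θ₁ θ₂ w) = T3 θ₁ θ₂ w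
          rw [t23 h₂ hcomm]; exact d13
      rw [hcard, hf1, hf2]
      simp

include h₁ h₂ hcomm in
lemma orb_biUnion {F : Finset (List A)} (hcl : ∀ w ∈ F, orb θ₁ θ₂ w ⊆ F) :
    (F.image (orb θ₁ θ₂)).biUnion id = F := by
  ext x
  simp only [Finset.mem_biUnion, Finset.mem_image, id]
  constructor
  · rintro ⟨s, ⟨w, hw, rfl⟩, hx⟩
    exact hcl w hw hx
  · intro hx
    exact ⟨orb θ₁ θ₂ x, ⟨x, hx, rfl⟩, mem_orb_self x⟩

include h₁ h₂ hcomm in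
lemma orb_disj {F : Finset (List A)} :
    ∀ s ∈ F.image (orb θ₁ θ₂), ∀ t ∈ F.image (orb θ₁ θ₂), s ≠ t → Disjoint s t := by
  rintro s hs t ht hst
  rw [Finset.disjoint_left]
  intro y hys hyt
  apply hst
  obtain ⟨w, _, rfl⟩ := Finset.mem_image.mp hs
  obtain ⟨w', _, rfl⟩ := Finset.mem_image.mp ht
  rw [← orb_eq_of_mem h₁ h₂ hcomm hys, ← orb_eq_of_mem h₁ h₂ hcomm hyt]

include h₁ h₂ hcomm in
lemma card_eq_sum_orb {F : Finset (List A)} (hcl : ∀ w ∈ F, orb θ₁ θ₂ w ⊆ F) :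
    F.card = ∑ s ∈ F.image (orb θ₁ θ₂), s.card := by
  conv_lhs => rw [← orb_biUnion h₁ h₂ hcomm hcl]
  exact Finset.card_biUnion (orb_disj h₁ h₂ hcomm)

include h₁ h₂ hcomm in
lemma filter_card_eq_sum_orb {F : Finset (List A)} (hcl : ∀ w ∈ F, orb θ₁ θ₂ w ⊆ F)
    (p : List A → Prop) :
    (F.filter p).card = ∑ s ∈ F.image (orb θ₁ θ₂), (s.filter p).card := by
  have h : F.filter p = (F.image (orb θ₁ θ₂)).biUnion (fun s => s.filter p) := by
    conv_lhs => rw [← orb_biUnion h₁ h₂ hcomm hcl]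
    exact Finset.filter_biUnion _ id p
  rw [h]
  exact Finset.card_biUnion (fun s hs t ht hst =>
    Finset.disjoint_filter_filter (orb_disj h₁ h₂ hcomm s hs t ht hst))

include h₁ h₂ hcomm in
lemma orbit_sum {F : Finset (List A)} (hcl : ∀ w ∈ F, orb θ₁ θ₂ w ⊆ F)
    (hw3 : ∀ w ∈ F, T3 θ₁ θ₂ w ≠ w) :
    F.card + (F.filter (IsPalin θ₁)).card + (F.filter (IsPalin θ₂)).card
      = 4 * (F.image (orb θ₁ θ₂)).card := by
  rw [card_eq_sum_orb h₁ h₂ hcomm hcl, filter_card_eq_sum_orb h₁ h₂ hcomm hcl,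
    filter_card_eq_sum_orb h₁ h₂ hcomm hcl, ← Finset.sum_add_distrib,
    ← Finset.sum_add_distrib]
  rw [Finset.sum_congr rfl (fun s hs => ?_), Finset.sum_const, smul_eq_mul, mul_comm]
  obtain ⟨w, hw, rfl⟩ := Finset.mem_image.mp hs
  exact orb_count h₁ h₂ hcomm (hw3 w hw)

end Orb

lemma map_fix {f : A → A} : ∀ {w : List A}, List.map f w = w → ∀ a ∈ w, f a = a := by
  intro w
  induction w with
  | nil => simp
  | cons b t ih =>
    intro h a ha
    simp only [List.map_cons, List.cons.injEq] at h
    rcases List.mem_cons.mp ha with rfl | hat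
    · exact h.1
    · exact ih h.2 a hat

section Fin

variable [Finite A]

/-- The set of factors of `u` of length `m`, as a finset. -/
noncomputable def LS (u : ℕ → A) (m : ℕ) : Finset (List A) :=
  ((List.finite_length_eq A m).subset (fun w hw => hw.1) :
    {w : List A | w.length = m ∧ IsFactor u w}.Finite).toFinset

lemma mem_LS {u : ℕ → A} {m : ℕ} {w : List A} :
    w ∈ LS u m ↔ w.length = m ∧ IsFactor u w := by
  simp [LS]

lemma LS_coe (u : ℕ → A) (m : ℕ) :
    ((LS u m : Finset (List A)) : Set (List A))
      = {w : List A | w.length = m ∧ IsFactor u w} :=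
  Set.Finite.coe_toFinset _

lemma fac_mem_LS (u : ℕ → A) (i m : ℕ) : fac u i m ∈ LS u m :=
  mem_LS.mpr ⟨fac_length u i m, isFactor_fac u i m⟩

variable {θ₁ θ₂ : A → A}
variable (h₁ : Function.Involutive θ₁) (h₂ : Function.Involutive θ₂)
  (hcomm : θ₁ ∘ θ₂ = θ₂ ∘ θ₁)

include h₁ h₂ hcomm in
lemma orb_subset_LS {u : ℕ → A}
    (hc₁ : ∀ w : List A, IsFactor u w → IsFactor u (antim θ₁ w))
    (hc₂ : ∀ w : List A, IsFactor u w → IsFactor u (antim θ₂ w))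
    {m : ℕ} {w : List A} (hw : w ∈ LS u m) : orb θ₁ θ₂ w ⊆ LS u m := by
  obtain ⟨hlen, hfac⟩ := mem_LS.mp hw
  intro y hy
  simp only [orb, Finset.mem_insert, Finset.mem_singleton] at hy
  rcases hy with rfl | rfl | rfl | rfl
  · exact hw
  · exact mem_LS.mpr ⟨by rw [antim_length, hlen], hc₁ w hfac⟩
  · exact mem_LS.mpr ⟨by rw [antim_length, hlen], hc₂ w hfac⟩
  · refine mem_LS.mpr ⟨by rw [T3_length, hlen], ?_⟩
    rw [← t12]
    exact hc₁ _ (hc₂ w hfac)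

lemma c_mem_fac {u : ℕ → A} {c : A} {B : ℕ}
    (hB : ∀ i, ∃ j, i ≤ j ∧ j ≤ i + B ∧ OccursAt u [c] j)
    {m : ℕ} (hm : B < m) (i : ℕ) : c ∈ fac u i m := by
  obtain ⟨j, hij, hjB, hocc⟩ := hB i
  have huj : c = u j := by
    have h' := hocc
    unfold OccursAt at h'
    simp only [List.length_singleton] at h'
    rw [show List.range 1 = [0] from rfl] at h'
    simp only [List.map_cons, List.map_nil, List.cons.injEq, Nat.add_zero] at h'
    exact h'.1
  unfold fac
  rw [List.mem_map]
  refine ⟨j - i, ?_, ?_⟩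
  · rw [List.mem_range]; omega
  · rw [show i + (j - i) = j by omega]; exact huj.symm

lemma T3_ne_LS {u : ℕ → A} {c : A} {B : ℕ}
    (hcneq : θ₁ (θ₂ c) ≠ c)
    (hB : ∀ i, ∃ j, i ≤ j ∧ j ≤ i + B ∧ OccursAt u [c] j)
    {m : ℕ} (hm : B < m) : ∀ w ∈ LS u m, T3 θ₁ θ₂ w ≠ w := by
  intro w hw heq
  obtain ⟨hlen, hfac⟩ := mem_LS.mp hw
  obtain ⟨i, rfl⟩ := eq_fac hlen hfac
  exact hcneq (map_fix heq c (c_mem_fac hB hm i))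

include h₁ h₂ hcomm in
lemma pal_loop₁ {e : List A} (hpal : antim θ₁ e = e) :
    orb θ₁ θ₂ e.tail = orb θ₁ θ₂ e.dropLast := by
  have ht : e.tail = antim θ₁ e.dropLast := by
    conv_lhs => rw [← hpal]
    exact tail_antim θ₁ e
  rw [ht, orb_antim₁ h₁ h₂ hcomm]

include h₁ h₂ hcomm in
lemma pal_loop₂ {e : List A} (hpal : antim θ₂ e = e) :
    orb θ₁ θ₂ e.tail = orb θ₁ θ₂ e.dropLast := by
  have ht : e.tail = antim θ₂ e.dropLast := by
    conv_lhs => rw [← hpal]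
    exact tail_antim θ₂ e
  rw [ht, orb_antim₂ h₁ h₂ hcomm]

include h₁ h₂ hcomm in
lemma orb_endpoints {e e' : List A} (h : e' ∈ orb θ₁ θ₂ e) :
    (orb θ₁ θ₂ e'.dropLast = orb θ₁ θ₂ e.dropLast ∧ orb θ₁ θ₂ e'.tail = orb θ₁ θ₂ e.tail) ∨
    (orb θ₁ θ₂ e'.dropLast = orb θ₁ θ₂ e.tail ∧ orb θ₁ θ₂ e'.tail = orb θ₁ θ₂ e.dropLast) := by
  simp only [orb, Finset.mem_insert, Finset.mem_singleton] at h
  rcases h with rfl | rfl | rfl | rfl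
  · exact Or.inl ⟨rfl, rfl⟩
  · refine Or.inr ⟨?_, ?_⟩
    · rw [dropLast_antim, orb_antim₁ h₁ h₂ hcomm]
    · rw [tail_antim, orb_antim₁ h₁ h₂ hcomm]
  · refine Or.inr ⟨?_, ?_⟩
    · rw [dropLast_antim, orb_antim₂ h₁ h₂ hcomm]
    · rw [tail_antim, orb_antim₂ h₁ h₂ hcomm]
  · refine Or.inl ⟨?_, ?_⟩
    · rw [dropLast_T3, orb_T3 h₁ h₂ hcomm]
    · rw [tail_T3, orb_T3 h₁ h₂ hcomm]

end Fin

end TwoAnti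

set_option maxHeartbeats 2000000 in
open TwoAnti in
/-- If a uniformly recurrent infinite word `u` has its language
closed under two distinct commuting involutive antimorphisms `Θ₁`, `Θ₂`, then
`ΔC(n) + 4 ≥ P_{Θ₁}(n) + P_{Θ₂}(n) + P_{Θ₁}(n+1) + P_{Θ₂}(n+1)` for all large `n`. -/
theorem two_antimorphisms_uniformly_recurrent_inequality
    {A : Type*} [Fintype A] (θ₁ θ₂ : A → A)
    (h₁ : Function.Involutive θ₁) (h₂ : Function.Involutive θ₂)
    (hne : θ₁ ≠ θ₂) (hcomm : θ₁ ∘ θ₂ = θ₂ ∘ θ₁)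
    (u : ℕ → A) (hall : ∀ a : A, ∃ i, u i = a)
    (hur : UniformlyRecurrent u)
    (hc₁ : ∀ w : List A, IsFactor u w → IsFactor u (antim θ₁ w))
    (hc₂ : ∀ w : List A, IsFactor u w → IsFactor u (antim θ₂ w)) :
    ∃ N : ℕ, ∀ n : ℕ, N < n →
      (fC u (n+1) : ℤ) - fC u n + 4 ≥
        (fP u θ₁ n : ℤ) + fP u θ₂ n + fP u θ₁ (n+1) + fP u θ₂ (n+1) := by
  classical
  -- a letter not fixed by θ₁ ∘ θ₂
  obtain ⟨a, ha⟩ := Function.ne_iff.mp hne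
  have hcneq : θ₁ (θ₂ (θ₂ a)) ≠ θ₂ a := by
    rw [h₂ a]; exact ha
  set c := θ₂ a with hcdef
  -- the gap bound for the letter c
  obtain ⟨i₀, hi₀⟩ := hall c
  have hfc : IsFactor u [c] := by
    refine ⟨i₀, ?_⟩
    unfold OccursAt
    simp only [List.length_singleton]
    rw [show List.range 1 = [0] from rfl]
    simp [hi₀]
  obtain ⟨B, hB⟩ := hur [c] hfc
  refine ⟨B, fun n hn => ?_⟩
  -- basic notation
  set F := LS u n with hFdef
  set E := LS u (n+1) with hEdef
  have hclF : ∀ w ∈ F, orb θ₁ θ₂ w ⊆ F :=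
    fun w hw => orb_subset_LS h₁ h₂ hcomm hc₁ hc₂ hw
  have hclE : ∀ w ∈ E, orb θ₁ θ₂ w ⊆ E :=
    fun w hw => orb_subset_LS h₁ h₂ hcomm hc₁ hc₂ hw
  have hw3F : ∀ w ∈ F, T3 θ₁ θ₂ w ≠ w := T3_ne_LS hcneq hB hn
  have hw3E : ∀ w ∈ E, T3 θ₁ θ₂ w ≠ w := T3_ne_LS hcneq hB (by omega)
  -- Burnside-type counting
  have hidF := orbit_sum h₁ h₂ hcomm hclF hw3F
  have hidE := orbit_sum h₁ h₂ hcomm hclE hw3E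
  set OV := F.image (orb θ₁ θ₂) with hOVdef
  set OE := E.image (orb θ₁ θ₂) with hOEdef
  -- the quotient Rauzy graph
  let Q := {s : Finset (List A) // s ∈ OV}
  let Gr : SimpleGraph Q :=
    { Adj := fun s t => s ≠ t ∧ ∃ e ∈ E,
        (orb θ₁ θ₂ e.dropLast = s.1 ∧ orb θ₁ θ₂ e.tail = t.1) ∨
        (orb θ₁ θ₂ e.dropLast = t.1 ∧ orb θ₁ θ₂ e.tail = s.1)
      symm := ⟨by
        rintro s t ⟨hst, e, he, h⟩
        exact ⟨hst.symm, e, he, h.symm⟩⟩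
      loopless := ⟨fun s h => h.1 rfl⟩ }
  have hfacF : ∀ i, fac u i n ∈ F := fun i => fac_mem_LS u i n
  have hfacE : ∀ i, fac u i (n+1) ∈ E := fun i => fac_mem_LS u i (n+1)
  let vtx : ℕ → Q := fun i => ⟨orb θ₁ θ₂ (fac u i n), Finset.mem_image_of_mem _ (hfacF i)⟩
  have hstep : ∀ j, Gr.Reachable (vtx j) (vtx (j+1)) := by
    intro j
    by_cases hq : vtx j = vtx (j+1)
    · rw [hq]
    · refine SimpleGraph.Adj.reachable ⟨hq, fac u j (n+1), hfacE j, Or.inl ⟨?_, ?_⟩⟩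
      · rw [dropLast_fac]
      · rw [tail_fac]
  have hreach : ∀ i j, i ≤ j → Gr.Reachable (vtx i) (vtx j) := by
    intro i j hij
    induction j, hij using Nat.le_induction with
    | base => exact SimpleGraph.Reachable.refl _
    | succ j hij ih => exact ih.trans (hstep j)
  have hvtx : ∀ s : Q, ∃ i, s = vtx i := by
    intro s
    obtain ⟨w, hwF, hw⟩ := Finset.mem_image.mp s.2
    obtain ⟨hlen, hfac⟩ := mem_LS.mp hwF
    obtain ⟨i, rfl⟩ := eq_fac hlen hfac
    exact ⟨i, Subtype.ext hw.symm⟩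
  have hconn : Gr.Connected := by
    rw [SimpleGraph.connected_iff]
    refine ⟨?_, ⟨vtx 0⟩⟩
    intro s t
    obtain ⟨i, rfl⟩ := hvtx s
    obtain ⟨j, rfl⟩ := hvtx t
    rcases le_total i j with h | h
    · exact hreach i j h
    · exact (hreach j i h).symm
  haveI : Nonempty Q := ⟨vtx 0⟩
  let d : Q := vtx 0
  -- key step: each vertex other than d yields a free edge orbit towards d
  have key : ∀ w : Q, w ≠ d → ∃ e : List A, orb θ₁ θ₂ e ∈ OE.filter (fun s => s.card = 4) ∧
      ∃ x : Q, (Gr.dist x d + 1 = Gr.dist w d) ∧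
        ((orb θ₁ θ₂ e.dropLast = w.1 ∧ orb θ₁ θ₂ e.tail = x.1) ∨
         (orb θ₁ θ₂ e.dropLast = x.1 ∧ orb θ₁ θ₂ e.tail = w.1)) := by
    intro w hw
    have hpos : 0 < Gr.dist w d := hconn.pos_dist_of_ne hw
    obtain ⟨p, hp⟩ := hconn.exists_walk_length_eq_dist w d
    cases p with
    | nil => rw [SimpleGraph.Walk.length_nil] at hp; omega
    | @cons _ y _ ha q =>
      rw [SimpleGraph.Walk.length_cons] at hp
      have hdy : Gr.dist y d ≤ q.length := SimpleGraph.dist_le q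
      have hwy : Gr.dist w d ≤ Gr.dist y d + 1 := by
        have hle1 : Gr.dist w y ≤ 1 := by
          have := SimpleGraph.dist_le (SimpleGraph.Walk.cons ha SimpleGraph.Walk.nil)
          simpa using this
        have := hconn.dist_triangle (u := w) (v := y) (w := d)
        omega
      have hdx : Gr.dist y d + 1 = Gr.dist w d := by omega
      obtain ⟨hne', e, heE, hends⟩ := ha
      have hney : w.1 ≠ y.1 := fun hh => hne' (Subtype.ext hh)
      refine ⟨e, ?_, y, hdx, hends⟩
      rw [Finset.mem_filter]
      refine ⟨Finset.mem_image_of_mem _ heE, ?_⟩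
      refine orb_card_four h₁ h₂ hcomm ?_ ?_ (hw3E e heE)
      · intro hpal
        have hloop := pal_loop₁ h₁ h₂ hcomm hpal
        rcases hends with ⟨hs, ht⟩ | ⟨hs, ht⟩
        · exact hney (by rw [← hs, ← ht, hloop])
        · exact hney (by rw [← ht, ← hs, hloop])
      · intro hpal
        have hloop := pal_loop₂ h₁ h₂ hcomm hpal
        rcases hends with ⟨hs, ht⟩ | ⟨hs, ht⟩
        · exact hney (by rw [← hs, ← ht, hloop])
        · exact hney (by rw [← ht, ← hs, hloop])
  -- injection from vertices (minus one) into free edge orbits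
  have hinj : OV.card ≤ (OE.filter (fun s => s.card = 4)).card + 1 := by
    choose e he x hx hends using key
    set f : Q → Finset (List A) :=
      fun w => if h : w ≠ d then orb θ₁ θ₂ (e w h) else ∅ with hfdef
    have hcard : (Finset.univ.erase d).card ≤ (OE.filter (fun s => s.card = 4)).card := by
      apply Finset.card_le_card_of_injOn f
      · intro w hw
        have hwne : w ≠ d := Finset.ne_of_mem_erase hw
        rw [hfdef]
        simp only [dif_pos hwne]
        exact he w hwne
      · intro w₁ hw₁ w₂ hw₂ hf
        have hne₁ : w₁ ≠ d := Finset.ne_of_mem_erase (Finset.mem_coe.mp hw₁)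
        have hne₂ : w₂ ≠ d := Finset.ne_of_mem_erase (Finset.mem_coe.mp hw₂)
        rw [hfdef] at hf
        simp only [dif_pos hne₁, dif_pos hne₂] at hf
        have hmem : e w₂ hne₂ ∈ orb θ₁ θ₂ (e w₁ hne₁) := by
          rw [hf]; exact mem_orb_self _
        have hep := orb_endpoints h₁ h₂ hcomm hmem
        have hcross : w₁.1 = w₂.1 ∨ (w₁.1 = (x w₂ hne₂).1 ∧ (x w₁ hne₁).1 = w₂.1) := by
          rcases hends w₁ hne₁ with ⟨hD1, hT1⟩ | ⟨hD1, hT1⟩ <;>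
          rcases hends w₂ hne₂ with ⟨hD2, hT2⟩ | ⟨hD2, hT2⟩ <;>
          rcases hep with ⟨hD, hT⟩ | ⟨hD, hT⟩
          · exact Or.inl (by rw [← hD1, ← hD, hD2])
          · exact Or.inr ⟨by rw [← hD1, ← hT, hT2], by rw [← hT1, ← hD, hD2]⟩
          · exact Or.inr ⟨by rw [← hD1, ← hD, hD2], by rw [← hT1, ← hT, hT2]⟩
          · exact Or.inl (by rw [← hD1, ← hT, hT2])
          · exact Or.inr ⟨by rw [← hT1, ← hT, hT2], by rw [← hD1, ← hD, hD2]⟩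
          · exact Or.inl (by rw [← hT1, ← hD, hD2])
          · exact Or.inl (by rw [← hT1, ← hT, hT2])
          · exact Or.inr ⟨by rw [← hT1, ← hD, hD2], by rw [← hD1, ← hT, hT2]⟩
        rcases hcross with hh | ⟨hh₁, hh₂⟩
        · exact Subtype.ext hh
        · exfalso
          have ex1 : x w₁ hne₁ = w₂ := Subtype.ext hh₂
          have ex2 : x w₂ hne₂ = w₁ := Subtype.ext hh₁.symm
          have d1 := hx w₁ hne₁
          have d2 := hx w₂ hne₂
          rw [ex1] at d1
          rw [ex2] at d2
          omega
    have hQd : (Finset.univ.erase d).card + 1 = Fintype.card Q := by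
      rw [Finset.card_erase_of_mem (Finset.mem_univ d), Finset.card_univ]
      have : 0 < Fintype.card Q := Fintype.card_pos
      omega
    have hcQ : OV.card = Fintype.card Q := (Fintype.card_coe OV).symm
    omega
  -- each edge orbit has at least two elements; free ones have four
  have hEsum : E.card = ∑ s ∈ OE, s.card := card_eq_sum_orb h₁ h₂ hcomm hclE
  have h2le : ∀ s ∈ OE, 2 ≤ s.card := by
    intro s hs
    obtain ⟨w, hwE, rfl⟩ := Finset.mem_image.mp hs
    exact Finset.one_lt_card.mpr
      ⟨w, mem_orb_self w, T3 θ₁ θ₂ w, T3_mem_orb w, (hw3E w hwE).symm⟩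
  have hsplit : ∑ s ∈ OE, s.card = ∑ s ∈ OE.filter (fun s => s.card = 4), s.card
      + ∑ s ∈ OE.filter (fun s => ¬ s.card = 4), s.card :=
    (Finset.sum_filter_add_sum_filter_not OE (fun s => s.card = 4) (fun s => s.card)).symm
  have hs4 : ∑ s ∈ OE.filter (fun s => s.card = 4), s.card
      = 4 * (OE.filter (fun s => s.card = 4)).card := by
    rw [Finset.sum_congr rfl (fun s hs => (Finset.mem_filter.mp hs).2),
      Finset.sum_const, smul_eq_mul, mul_comm]
  have hs2 : 2 * (OE.filter (fun s => ¬ s.card = 4)).card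
      ≤ ∑ s ∈ OE.filter (fun s => ¬ s.card = 4), s.card := by
    have := Finset.card_nsmul_le_sum (OE.filter (fun s => ¬ s.card = 4))
      (fun s => s.card) 2 (fun s hs => h2le s (Finset.filter_subset _ _ hs))
    simpa [mul_comm] using this
  have hOEsplit : OE.card = (OE.filter (fun s => s.card = 4)).card
      + (OE.filter (fun s => ¬ s.card = 4)).card :=
    (Finset.card_filter_add_card_filter_not (s := OE) (fun s : Finset (List A) => s.card = 4)).symm
  -- translate fC, fP
  have hfCn : fC u n = F.card := by
    rw [fC, hFdef, ← LS_coe u n, Set.ncard_coe_finset]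
  have hfCn1 : fC u (n+1) = E.card := by
    rw [fC, hEdef, ← LS_coe u (n+1), Set.ncard_coe_finset]
  have hfP : ∀ (θ : A → A) (m : ℕ),
      fP u θ m = ((LS u m).filter (IsPalin θ)).card := by
    intro θ m
    rw [fP]
    have hset : {w : List A | w.length = m ∧ IsFactor u w ∧ IsPalin θ w}
        = (((LS u m).filter (IsPalin θ) : Finset (List A)) : Set (List A)) := by
      ext w
      simp only [Set.mem_setOf_eq, Finset.coe_filter, Finset.mem_coe, mem_LS]
      tauto
    rw [hset, Set.ncard_coe_finset]
  rw [hfCn, hfCn1, hfP θ₁ n, hfP θ₂ n, hfP θ₁ (n+1), hfP θ₂ (n+1), ← hFdef, ← hEdef]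
  rw [ge_iff_le]
  omega
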